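/- For a symmetric positive definite q×q matrix variable Σ, the function Σ ↦ trace(A Σ^{-1/2}) + trace(Σ^{1/2}), where A is a fixed symmetric positive definite q×q matrix, is minimized at Σ = A, and the minimum value equals 2·trace(A^{1/2}). -/

import Mathlib

open Matrix

/-- The positive semidefinite square root of a positive semidefinite matrix
(the definition `Matrix.PosSemidef.sqrt` of the older Mathlib, since removed). -/
noncomputable def Matrix.PosSemidef.sqrt {n 𝕜 : Type*} [Fintype n] [RCLike 𝕜] [PartialOrder 𝕜]
    [DecidableEq n]     {A : Matrix n n 𝕜} (hA : A.PosSemidef) : Matrix n n 𝕜 :=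
  hA.1.eigenvectorUnitary.1 * diagonal ((↑) ∘ (√·) ∘ hA.1.eigenvalues) *
  (star hA.1.eigenvectorUnitary : Matrix n n 𝕜)

lemma Matrix.PosSemidef.posSemidef_sqrt {n : ℕ} {S : Matrix (Fin n) (Fin n) ℝ}
    (hS : S.PosSemidef) : hS.sqrt.PosSemidef := by
  unfold Matrix.PosSemidef.sqrt
  have hD : (diagonal (RCLike.ofReal ∘ (√·) ∘ hS.1.eigenvalues : Fin n → ℝ)).PosSemidef :=
    Matrix.PosSemidef.diagonal (fun i => Real.sqrt_nonneg _)
  have := hD.mul_mul_conjTranspose_same (hS.1.eigenvectorUnitary : Matrix (Fin n) (Fin n) ℝ)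
  exact this

lemma Matrix.PosSemidef.sqrt_mul_self {n : ℕ} {S : Matrix (Fin n) (Fin n) ℝ}
    (hS : S.PosSemidef) : hS.sqrt * hS.sqrt = S := by
  unfold Matrix.PosSemidef.sqrt
  set U := hS.1.eigenvectorUnitary
  have hU : (star U : Matrix (Fin n) (Fin n) ℝ) * (U : Matrix (Fin n) (Fin n) ℝ) = 1 :=
    Unitary.star_mul_self_of_mem U.2
  have hD : diagonal (RCLike.ofReal ∘ (√·) ∘ hS.1.eigenvalues : Fin n → ℝ) *
      diagonal (RCLike.ofReal ∘ (√·) ∘ hS.1.eigenvalues : Fin n → ℝ) =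
      diagonal (RCLike.ofReal ∘ hS.1.eigenvalues) := by
    rw [diagonal_mul_diagonal]
    congr 1
    funext i
    simp [Real.mul_self_sqrt (hS.eigenvalues_nonneg i)]
  have hspec := hS.1.spectral_theorem
  rw [Unitary.conjStarAlgAut_apply] at hspec
  calc (U : Matrix (Fin n) (Fin n) ℝ) * diagonal (RCLike.ofReal ∘ (√·) ∘ hS.1.eigenvalues) * star (U : Matrix (Fin n) (Fin n) ℝ) *
        ((U : Matrix (Fin n) (Fin n) ℝ) * diagonal (RCLike.ofReal ∘ (√·) ∘ hS.1.eigenvalues) * star (U : Matrix (Fin n) (Fin n) ℝ))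
      = (U : Matrix (Fin n) (Fin n) ℝ) * diagonal (RCLike.ofReal ∘ (√·) ∘ hS.1.eigenvalues) *
        ((star U : Matrix (Fin n) (Fin n) ℝ) * (U : Matrix (Fin n) (Fin n) ℝ)) *
        diagonal (RCLike.ofReal ∘ (√·) ∘ hS.1.eigenvalues) * star (U : Matrix (Fin n) (Fin n) ℝ) := by
        simp only [Matrix.mul_assoc]
    _ = S := by
        rw [hU, Matrix.mul_one, Matrix.mul_assoc (U : Matrix (Fin n) (Fin n) ℝ), hD]
        exact hspec.symm

lemma trace_mul_transpose_self_nonneg {n : ℕ} (M : Matrix (Fin n) (Fin n) ℝ) :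
    0 ≤ (M * Mᵀ).trace := by
  simp only [Matrix.trace, Matrix.diag, Matrix.mul_apply, Matrix.transpose_apply]
  exact Finset.sum_nonneg fun i _ => Finset.sum_nonneg fun j _ => mul_self_nonneg _

lemma sqrt_posDef {n : ℕ} {S : Matrix (Fin n) (Fin n) ℝ} (hS : S.PosDef) :
    (hS.posSemidef.sqrt).PosDef := by
  refine hS.posSemidef.posSemidef_sqrt.posDef_iff_isUnit.mpr ?_
  have h : hS.posSemidef.sqrt * hS.posSemidef.sqrt = S := hS.posSemidef.sqrt_mul_self
  exact isUnit_of_mul_isUnit_left (h ▸ hS.isUnit)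

/-- For a fixed symmetric positive definite `q×q` matrix `A`, the function
`Σ ↦ trace(A Σ^{-1/2}) + trace(Σ^{1/2})` over symmetric positive definite `Σ` is
minimized at `Σ = A`, with minimum value `2 trace(A^{1/2})`. -/
theorem stmt_0 {q : ℕ} (A : Matrix (Fin q) (Fin q) ℝ) (hA : A.PosDef) :
    (∀ (S : Matrix (Fin q) (Fin q) ℝ) (hS : S.PosDef),
      (A * (hA.posSemidef.sqrt)⁻¹).trace + (hA.posSemidef.sqrt).trace ≤
        (A * (hS.posSemidef.sqrt)⁻¹).trace + (hS.posSemidef.sqrt).trace) ∧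
    (A * (hA.posSemidef.sqrt)⁻¹).trace + (hA.posSemidef.sqrt).trace =
      2 * (hA.posSemidef.sqrt).trace := by
  have hT : (hA.posSemidef.sqrt).PosDef := sqrt_posDef hA
  set T := hA.posSemidef.sqrt with hTdef
  have hT2 : T * T = A := hA.posSemidef.sqrt_mul_self
  have hTinv : T * T⁻¹ = 1 := Matrix.mul_nonsing_inv _ (isUnit_iff_isUnit_det _ |>.mp hT.isUnit)
  have hAinv : A * T⁻¹ = T := by
    rw [← hT2, Matrix.mul_assoc, hTinv, Matrix.mul_one]
  have hval : (A * T⁻¹).trace + T.trace = 2 * T.trace := by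
    rw [hAinv]; ring
  refine ⟨fun S hS => ?_, hval⟩
  rw [hval]
  -- Set up B = S^{1/2}, R = B^{1/2}
  have hB : (hS.posSemidef.sqrt).PosDef := sqrt_posDef hS
  set B := hS.posSemidef.sqrt with hBdef
  have hR : (hB.posSemidef.sqrt).PosDef := sqrt_posDef hB
  set R := hB.posSemidef.sqrt with hRdef
  have hR2 : R * R = B := hB.posSemidef.sqrt_mul_self
  have hRu : IsUnit R.det := isUnit_iff_isUnit_det _ |>.mp hR.isUnit
  have hRinv : R * R⁻¹ = 1 := Matrix.mul_nonsing_inv _ hRu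
  have hinvR : R⁻¹ * R = 1 := Matrix.nonsing_inv_mul _ hRu
  have hRsym : Rᵀ = R := hR.isHermitian.eq
  have hTsym : Tᵀ = T := hT.isHermitian.eq
  have hRinvsym : (R⁻¹)ᵀ = R⁻¹ := by
    rw [Matrix.transpose_nonsing_inv, hRsym]
  have hBinv : B⁻¹ = R⁻¹ * R⁻¹ := by
    rw [← hR2, Matrix.mul_inv_rev]
  -- key inequality: 0 ≤ trace ((R⁻¹*T - R) * (R⁻¹*T - R)ᵀ)
  have key := trace_mul_transpose_self_nonneg (R⁻¹ * T - R)
  have hexp : (R⁻¹ * T - R) * (R⁻¹ * T - R)ᵀ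
      = R⁻¹ * T * (T * R⁻¹) - R⁻¹ * T * R - R * (T * R⁻¹) + R * R := by
    rw [Matrix.transpose_sub, Matrix.transpose_mul, hTsym, hRinvsym, hRsym]
    noncomm_ring
  rw [hexp] at key
  have t1 : (R⁻¹ * T * (T * R⁻¹)).trace = (A * B⁻¹).trace := by
    rw [hBinv]
    rw [show R⁻¹ * T * (T * R⁻¹) = R⁻¹ * (T * T * R⁻¹) by noncomm_ring, Matrix.trace_mul_comm,
      hT2, Matrix.mul_assoc]
  have t2 : (R⁻¹ * T * R).trace = T.trace := by
    rw [Matrix.trace_mul_comm, ← Matrix.mul_assoc, hRinv, Matrix.one_mul]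
  have t3 : (R * (T * R⁻¹)).trace = T.trace := by
    rw [Matrix.trace_mul_comm, Matrix.mul_assoc, hinvR, Matrix.mul_one]
  rw [Matrix.trace_add, Matrix.trace_sub, Matrix.trace_sub, t1, t2, t3, hR2] at key
  linarith
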